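/- Every finitely generated projective module over a Bezout domain is free. -/

import Mathlib

open LinearMap Submodule

set_option maxHeartbeats 1000000
set_option synthInstance.maxHeartbeats 200000

/-- Over a Bézout domain, every finitely generated submodule of `Fin n → R` is free. -/
theorem free_of_fg_submodule_pi (R : Type*) [CommRing R] [IsDomain R] [IsBezout R] :
    ∀ (n : ℕ) (N : Submodule R (Fin n → R)), N.FG → Module.Free R N := by
  intro n
  induction n with
  | zero =>
    intro N _
    have : Subsingleton N := ⟨fun a b => Subtype.ext (funext fun i => i.elim0)⟩
    infer_instance
  | succ n ih =>
    intro N hN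
    -- the projection onto the last coordinate
    set π : (Fin (n + 1) → R) →ₗ[R] R := LinearMap.proj (Fin.last n) with hπ
    set f : N →ₗ[R] R := π ∘ₗ N.subtype with hf
    -- the "drop the last coordinate" map
    set ψ : (Fin (n + 1) → R) →ₗ[R] (Fin n → R) := LinearMap.funLeft R R Fin.castSucc with hψ
    -- key: any submodule of N where the last coordinate vanishes and which is fg is free
    have key : ∀ (K : Submodule R N), K.FG → (∀ x ∈ K, f x = 0) → Module.Free R K := by
      intro K hK h0
      set e : K →ₗ[R] (Fin n → R) := ψ ∘ₗ N.subtype ∘ₗ K.subtype with he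
      have hinj : Function.Injective e := by
        intro x y hxy
        apply Subtype.ext
        apply Subtype.ext
        funext i
        refine Fin.lastCases ?_ (fun j => ?_) i
        · have hx := h0 x x.2
          have hy := h0 y y.2
          simp only [hf, hπ, LinearMap.comp_apply, LinearMap.proj_apply,
            Submodule.coe_subtype] at hx hy
          rw [hx, hy]
        · simpa [he, hψ, LinearMap.funLeft_apply] using congrFun hxy j
      have hfg : (LinearMap.range e).FG := by
        have : Module.Finite R K := Module.Finite.iff_fg.mpr hK
        have : Module.Finite R (LinearMap.range e) := Module.Finite.range e
        exact Module.Finite.iff_fg.mp this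
      have hfree : Module.Free R (LinearMap.range e) := ih _ hfg
      exact Module.Free.of_equiv (LinearEquiv.ofInjective e hinj).symm
    -- the image of f is a finitely generated ideal, hence principal
    have hrange : (LinearMap.range f).FG := by
      have : Module.Finite R N := Module.Finite.iff_fg.mpr hN
      have : Module.Finite R (LinearMap.range f) := Module.Finite.range f
      exact Module.Finite.iff_fg.mp this
    obtain ⟨a, ha⟩ := (IsBezout.isPrincipal_of_FG _ hrange).1
    by_cases haz : a = 0
    · -- f = 0 on N, so N itself has vanishing last coordinates
      have h0 : ∀ x : N, f x = 0 := by
        intro x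
        have hmem : f x ∈ LinearMap.range f := ⟨x, rfl⟩
        rw [ha, haz, Submodule.span_zero_singleton] at hmem
        simpa using hmem
      have hNfin : Module.Finite R N := Module.Finite.iff_fg.mpr hN
      have : Module.Free R (⊤ : Submodule R N) := key ⊤ hNfin.fg_top
        (fun x _ => h0 x)
      exact Module.Free.of_equiv (Submodule.topEquiv (R := R) (M := N))
    · -- f has range span {a} with a ≠ 0; build surjection g : N →ₗ[R] R
      set e1 : R ≃ₗ[R] (R ∙ a) := LinearEquiv.toSpanNonzeroSingleton R R a haz with he1
      have hspan : LinearMap.range f = (R ∙ a) := ha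
      set g : N →ₗ[R] R :=
        e1.symm.toLinearMap ∘ₗ (LinearEquiv.ofEq _ _ hspan).toLinearMap ∘ₗ f.rangeRestrict
        with hg
      have hgsurj : Function.Surjective g := by
        intro r
        obtain ⟨x, hx⟩ := f.surjective_rangeRestrict
          ((LinearEquiv.ofEq _ _ hspan).symm (e1 r))
        refine ⟨x, ?_⟩
        rw [hg]
        simp only [LinearMap.comp_apply, LinearEquiv.coe_coe, hx]
        apply e1.injective
        rw [LinearEquiv.apply_symm_apply]
        exact Subtype.ext rfl
      have hker : LinearMap.ker g = LinearMap.ker f := by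
        ext x
        simp only [hg, LinearMap.mem_ker, LinearMap.comp_apply, LinearEquiv.coe_coe,
          EmbeddingLike.map_eq_zero_iff]
        constructor
        · intro h
          have := congrArg Subtype.val h
          simpa using this
        · intro h
          apply Subtype.ext
          simpa using h
      clear_value e1
      clear he1 hg
      clear_value g
      -- split the exact sequence 0 → ker g → N → R → 0
      obtain ⟨s, hs⟩ := Module.projective_lifting_property g LinearMap.id hgsurj
      have hexact : Function.Exact (LinearMap.ker g).subtype g := g.exact_subtype_ker_map
      have hsplit := Function.Exact.splitSurjectiveEquiv
        (M := LinearMap.ker g) (f := (LinearMap.ker g).subtype) (g := g) hexact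
        (by exact Submodule.injective_subtype (LinearMap.ker g))
      obtain ⟨equiv, -⟩ := hsplit ⟨s, hs⟩
      -- ker g is finitely generated (it is a direct summand of the fg module N)
      have hNfin : Module.Finite R N := Module.Finite.iff_fg.mpr hN
      have hkfin : Module.Finite R (LinearMap.ker g) := by
        have : Module.Finite R (↥(LinearMap.ker g) × R) := Module.Finite.equiv equiv
        exact Module.Finite.of_surjective (LinearMap.fst R ↥(LinearMap.ker g) R)
          Prod.fst_surjective
      -- ker g is free by the key lemma
      have hkfree : Module.Free R (LinearMap.ker g) := by
        refine key (LinearMap.ker g) (Module.Finite.iff_fg.mp hkfin) ?_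
        intro x hx
        rw [hker] at hx
        exact hx
      exact Module.Free.of_equiv equiv.symm

/-- Every finitely generated projective module over a Bezout domain is free. -/
theorem free_of_projective_over_bezout
    (R : Type*) [CommRing R] [IsDomain R] [IsBezout R]
    (M : Type*) [AddCommGroup M] [Module R M]
    [Module.Finite R M] [Module.Projective R M] :
    Module.Free R M := by
  obtain ⟨n, f, g, hf, hg, hfg⟩ := Module.Finite.exists_comp_eq_id_of_projective R M
  have hfgsub : (LinearMap.range g).FG := by
    have : Module.Finite R (LinearMap.range g) := Module.Finite.range g
    exact Module.Finite.iff_fg.mp this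
  have : Module.Free R (LinearMap.range g) := free_of_fg_submodule_pi R n _ hfgsub
  exact Module.Free.of_equiv (LinearEquiv.ofInjective g hg).symm
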